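/- For n ≥ 2, let A_n := J_n − I_n ∈ M_n(ℂ), where J_n is the n×n all-ones matrix and I_n the identity. Then N(A_n²)/(γ · N(A_n)²) = (1 − (σ²/(σ²+μ²)) · (2n−3)/(n(n−1)))^{1/2}, and consequently N(A_n²)/(γ · N(A_n)²) → 1 as n → ∞. -/

import Mathlib

open Matrix

/-- The Frobenius norm of a complex matrix. -/
noncomputable def frobNorm {n : ℕ} (A : Matrix (Fin n) (Fin n) ℂ) : ℝ :=
  Real.sqrt (∑ i, ∑ j, ‖A i j‖ ^ 2)

/-- The norm `N(Z) = ((1/2)σ²‖Z‖_F² + (1/2)μ²|tr Z|²)^(1/2)` on `M_n(ℂ)`. -/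
noncomputable def N2 (σ μ : ℝ) {n : ℕ} (Z : Matrix (Fin n) (Fin n) ℂ) : ℝ :=
  Real.sqrt ((1 / 2) * σ ^ 2 * frobNorm Z ^ 2 + (1 / 2) * μ ^ 2 * ‖Z.trace‖ ^ 2)

/-- The all-ones matrix `J_n`. -/
def Jmat (n : ℕ) : Matrix (Fin n) (Fin n) ℂ := Matrix.of fun _ _ => 1


lemma entryA {n : ℕ} (i j : Fin n) : (Jmat n - 1) i j = if i = j then 0 else 1 := by
  simp only [Matrix.sub_apply, Jmat, Matrix.of_apply, Matrix.one_apply]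
  split <;> ring

lemma entryA2 {n : ℕ} (i j : Fin n) :
    ((Jmat n - 1) * (Jmat n - 1)) i j = (n : ℂ) - 2 + if i = j then 1 else 0 := by
  rw [Matrix.mul_apply]
  simp only [entryA]
  have key : ∀ k : Fin n, (if i = k then (0:ℂ) else 1) * (if k = j then (0:ℂ) else 1)
      = 1 - (if i = k then 1 else 0) - ((if k = j then 1 else 0)
          - (if i = k then 1 else 0) * (if k = j then 1 else 0)) := by
    intro k; by_cases hi : i = k <;> by_cases hj : k = j <;> simp [hi, hj]
  simp only [key]
  have h1 : ∑ k : Fin n, (if i = k then (1:ℂ) else 0) = 1 := by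
    simp [Finset.sum_ite_eq]
  have h2 : ∑ k : Fin n, (if k = j then (1:ℂ) else 0) = 1 := by
    simp [Finset.sum_ite_eq']
  have h3 : ∑ k : Fin n, (if i = k then (1:ℂ) else 0) * (if k = j then 1 else 0)
      = if i = j then 1 else 0 := by
    have : ∀ k : Fin n, (if i = k then (1:ℂ) else 0) * (if k = j then 1 else 0)
        = if i = k then (if k = j then (1:ℂ) else 0) else 0 := by
      intro k; split <;> simp
    simp only [this, Finset.sum_ite_eq, Finset.mem_univ, if_true]
  simp only [Finset.sum_sub_distrib, Finset.sum_const, Finset.card_univ, Fintype.card_fin,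
    nsmul_eq_mul, mul_one, h1, h2, h3]
  ring

lemma traceA {n : ℕ} : (Jmat n - 1).trace = 0 := by
  simp only [Matrix.trace, Matrix.diag, entryA, if_pos rfl]
  simp

lemma traceA2 {n : ℕ} : ((Jmat n - 1) * (Jmat n - 1)).trace = (n : ℂ) * ((n : ℂ) - 1) := by
  simp only [Matrix.trace, Matrix.diag, entryA2, if_pos rfl]
  simp [Finset.sum_const]
  ring

lemma frobA_sq {n : ℕ} :
    ∑ i : Fin n, ∑ j : Fin n, ‖(Jmat n - 1) i j‖ ^ 2 = (n:ℝ)^2 - n := by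
  simp only [entryA]
  have h : ∀ i j : Fin n, ‖(if i = j then (0:ℂ) else 1)‖ ^ 2
      = 1 - (if i = j then (1:ℝ) else 0) := by
    intro i j; split <;> simp
  simp only [h, Finset.sum_sub_distrib, Finset.sum_const, Finset.card_univ, Fintype.card_fin,
    nsmul_eq_mul, mul_one, Finset.sum_ite_eq, Finset.mem_univ, if_true]
  push_cast; ring

lemma frobA2_sq {n : ℕ} (hn : 2 ≤ n) :
    ∑ i : Fin n, ∑ j : Fin n, ‖((Jmat n - 1) * (Jmat n - 1)) i j‖ ^ 2
      = (n:ℝ) * ((n:ℝ)-1)^2 + ((n:ℝ)^2 - n) * ((n:ℝ)-2)^2 := by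
  have hn2 : (2:ℝ) ≤ (n:ℝ) := by exact_mod_cast hn
  have h : ∀ i j : Fin n, ‖((Jmat n - 1) * (Jmat n - 1)) i j‖ ^ 2
      = ((n:ℝ)-2)^2 + (if i = j then (((n:ℝ)-1)^2 - ((n:ℝ)-2)^2) else 0) := by
    intro i j
    rw [entryA2]
    by_cases hij : i = j <;> simp only [hij, if_true, if_false, if_pos, if_neg]
    · have h1 : (n : ℂ) - 2 + 1 = (((n:ℝ) - 1 : ℝ) : ℂ) := by push_cast; ring
      rw [h1, Complex.norm_real, Real.norm_eq_abs, abs_of_nonneg (by linarith)]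
      ring
    · have h1 : (n : ℂ) - 2 + 0 = (((n:ℝ) - 2 : ℝ) : ℂ) := by push_cast; ring
      rw [h1, Complex.norm_real, Real.norm_eq_abs, abs_of_nonneg (by linarith)]
      ring
  simp only [h, Finset.sum_add_distrib, Finset.sum_const, Finset.card_univ, Fintype.card_fin,
    nsmul_eq_mul, mul_one, Finset.sum_ite_eq, Finset.mem_univ, if_true]
  push_cast; ring

lemma frobNorm_sq {n : ℕ} (A : Matrix (Fin n) (Fin n) ℂ) :
    frobNorm A ^ 2 = ∑ i, ∑ j, ‖A i j‖ ^ 2 := by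
  rw [frobNorm, Real.sq_sqrt]
  positivity

lemma key (σ μ : ℝ) (hσ : 0 < σ) (γ : ℝ)
    (hγ : γ = Real.sqrt (2 * σ ^ 2 + 2 * μ ^ 2) / σ ^ 2) (n : ℕ) (hn : 2 ≤ n) :
    N2 σ μ ((Jmat n - 1) * (Jmat n - 1)) / (γ * N2 σ μ (Jmat n - 1) ^ 2) =
      Real.sqrt (1 - σ ^ 2 / (σ ^ 2 + μ ^ 2) *
        ((2 * (n : ℝ) - 3) / ((n : ℝ) * ((n : ℝ) - 1)))) := by
  have hn2 : (2:ℝ) ≤ (n:ℝ) := by exact_mod_cast hn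
  have hσ2 : (0:ℝ) < σ ^ 2 := by positivity
  have hsm : (0:ℝ) < σ ^ 2 + μ ^ 2 := by positivity
  have hnn : (0:ℝ) ≤ (n:ℝ)^2 - n := by nlinarith
  -- N2 of A squared
  have hNA : N2 σ μ (Jmat n - 1) ^ 2 = (1/2) * σ^2 * ((n:ℝ)^2 - n) := by
    rw [N2, Real.sq_sqrt, frobNorm_sq, frobA_sq, traceA]
    · simp
    · rw [frobNorm_sq, frobA_sq, traceA]
      simp only [norm_zero]
      nlinarith [hnn, hσ2]
  -- trace abs of A^2
  have htr : ‖((Jmat n - 1) * (Jmat n - 1)).trace‖ ^ 2 = ((n:ℝ) * ((n:ℝ)-1))^2 := by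
    rw [traceA2]
    have : (n : ℂ) * ((n:ℂ) - 1) = (((n:ℝ) * ((n:ℝ)-1) : ℝ) : ℂ) := by push_cast; ring
    rw [this, Complex.norm_real, Real.norm_eq_abs, sq_abs]
  set X : ℝ := (1/2) * σ^2 * ((n:ℝ) * ((n:ℝ)-1)^2 + ((n:ℝ)^2 - n) * ((n:ℝ)-2)^2)
      + (1/2) * μ^2 * ((n:ℝ) * ((n:ℝ)-1))^2 with hX
  have hNA2 : N2 σ μ ((Jmat n - 1) * (Jmat n - 1)) = Real.sqrt X := by
    rw [N2, frobNorm_sq, frobA2_sq hn, htr]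
  set D : ℝ := (σ^2 + μ^2) * ((n:ℝ)^2 - n)^2 / 2 with hD
  have hdenom : γ * N2 σ μ (Jmat n - 1) ^ 2 = Real.sqrt D := by
    rw [hNA, hγ]
    rw [show D = (2 * σ^2 + 2*μ^2) * (((n:ℝ)^2 - n)/2)^2 by rw [hD]; ring]
    rw [Real.sqrt_mul (by positivity), Real.sqrt_sq (by linarith)]
    field_simp
  rw [hNA2, hdenom, ← Real.sqrt_div (by positivity)]
  congr 1
  have h1 : (n:ℝ) ≠ 0 := by linarith
  have h2 : (n:ℝ) - 1 ≠ 0 := by linarith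
  have hD0 : D ≠ 0 := by
    rw [hD]
    have : (n:ℝ)^2 - n ≠ 0 := by nlinarith
    positivity
  rw [div_eq_iff hD0, hX, hD]
  field_simp
  ring

lemma glim : Filter.Tendsto (fun n : ℕ => (2 * (n:ℝ) - 3) / ((n:ℝ) * ((n:ℝ) - 1)))
    Filter.atTop (nhds 0) := by
  apply tendsto_of_tendsto_of_tendsto_of_le_of_le' (tendsto_const_nhds (x := (0:ℝ)))
    (tendsto_const_div_atTop_nhds_zero_nat 4)
  · filter_upwards [Filter.eventually_ge_atTop 2] with n hn
    have hn2 : (2:ℝ) ≤ (n:ℝ) := by exact_mod_cast hn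
    apply div_nonneg (by linarith)
    nlinarith
  · filter_upwards [Filter.eventually_ge_atTop 2] with n hn
    have hn2 : (2:ℝ) ≤ (n:ℝ) := by exact_mod_cast hn
    rw [div_le_div_iff₀ (by nlinarith) (by linarith)]
    nlinarith


/-- For `A_n = J_n − I_n` and `n ≥ 2`:
`N(A_n²)/(γ N(A_n)²) = (1 − (σ²/(σ²+μ²))(2n−3)/(n(n−1)))^{1/2}`, and this ratio tends
to `1` as `n → ∞`. -/
theorem ratio_formula_and_limit (σ μ : ℝ) (hσ : 0 < σ)
    (γ : ℝ) (hγ : γ = Real.sqrt (2 * σ ^ 2 + 2 * μ ^ 2) / σ ^ 2) :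
    (∀ n : ℕ, 2 ≤ n →
      N2 σ μ ((Jmat n - 1) * (Jmat n - 1)) / (γ * N2 σ μ (Jmat n - 1) ^ 2) =
        Real.sqrt (1 - σ ^ 2 / (σ ^ 2 + μ ^ 2) *
          ((2 * (n : ℝ) - 3) / ((n : ℝ) * ((n : ℝ) - 1))))) ∧
    Filter.Tendsto
      (fun n : ℕ =>
        N2 σ μ ((Jmat n - 1) * (Jmat n - 1)) / (γ * N2 σ μ (Jmat n - 1) ^ 2))
      Filter.atTop (nhds 1) := by
  refine ⟨key σ μ hσ γ hγ, ?_⟩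
  have heq : (fun n : ℕ => Real.sqrt (1 - σ ^ 2 / (σ ^ 2 + μ ^ 2) *
        ((2 * (n : ℝ) - 3) / ((n : ℝ) * ((n : ℝ) - 1)))))
      =ᶠ[Filter.atTop] (fun n : ℕ =>
        N2 σ μ ((Jmat n - 1) * (Jmat n - 1)) / (γ * N2 σ μ (Jmat n - 1) ^ 2)) := by
    filter_upwards [Filter.eventually_ge_atTop 2] with n hn
    exact (key σ μ hσ γ hγ n hn).symm
  apply Filter.Tendsto.congr' heq
  have h1 : Filter.Tendsto (fun n : ℕ => 1 - σ ^ 2 / (σ ^ 2 + μ ^ 2) *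
      ((2 * (n:ℝ) - 3) / ((n:ℝ) * ((n:ℝ) - 1)))) Filter.atTop (nhds 1) := by
    have := (tendsto_const_nhds (x := (1:ℝ)) (f := Filter.atTop (α := ℕ))).sub
      ((tendsto_const_nhds (x := σ ^ 2 / (σ ^ 2 + μ ^ 2))).mul glim)
    simpa using this
  have h := h1.sqrt
  rwa [Real.sqrt_one] at h
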